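/- Let a_1(1), b_1(2) > 0, a_1(2) > 0 and q_{12}, q_{21} > 0. Define γ = 1 + q_{12}/a_1(1) + q_{21}/a_1(2) and, for x > a_1(2)/b_1(2), h_1(x) = C_1 (b_1(2)x - a_1(2))^{q_{21}/a_1(2)} / x^γ and h_2(x) = C_1 a_1(1) (b_1(2)x - a_1(2))^{q_{21}/a_1(2) - 1} / x^γ. Then h_1 and h_2 solve the stationary Fokker–Planck system: 0 = ((a_1(2)x - b_1(2)x^2) h_2(x))' + q_{21} h_2(x) - q_{12} h_1(x) and 0 = (a_1(1) x h_1(x))' + q_{12} h_1(x) - q_{21} h_2(x) on (a_1(2)/b_1(2), ∞). -/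

import Mathlib

theorem stmt11 (a11 a12 b12 q12 q21 C1 γ : ℝ)
    (ha11 : 0 < a11) (ha12 : 0 < a12) (hb12 : 0 < b12)
    (hq12 : 0 < q12) (hq21 : 0 < q21)
    (hγ : γ = 1 + q12 / a11 + q21 / a12)
    (h1 h2 : ℝ → ℝ)
    (hh1 : ∀ x, h1 x = C1 * (b12 * x - a12) ^ (q21 / a12) / x ^ γ)
    (hh2 : ∀ x, h2 x = C1 * a11 * (b12 * x - a12) ^ (q21 / a12 - 1) / x ^ γ) :
    ∀ x, a12 / b12 < x →
      HasDerivAt (fun y => (a12 * y - b12 * y ^ 2) * h2 y) (q12 * h1 x - q21 * h2 x) x ∧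
      HasDerivAt (fun y => a11 * y * h1 y) (q21 * h2 x - q12 * h1 x) x := by
  intro x hx
  have hx0 : 0 < x := lt_trans (div_pos ha12 hb12) hx
  have hbx : 0 < b12 * x - a12 := by
    have := (div_lt_iff₀ hb12).mp hx
    linarith [this]
  set α := q21 / a12 with hα
  -- derivative of the base
  have hbase : HasDerivAt (fun y => b12 * y - a12) b12 x := by
    simpa using ((hasDerivAt_id x).const_mul b12).sub_const a12
  have hpow1 : HasDerivAt (fun y => (b12 * y - a12) ^ α)
      (b12 * α * (b12 * x - a12) ^ (α - 1)) x :=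
    hbase.rpow_const (Or.inl hbx.ne')
  have hpow2 : HasDerivAt (fun y => (b12 * y - a12) ^ (α - 1))
      (b12 * (α - 1) * (b12 * x - a12) ^ (α - 1 - 1)) x :=
    hbase.rpow_const (Or.inl hbx.ne')
  have hg : HasDerivAt (fun y : ℝ => y ^ γ) (γ * x ^ (γ - 1)) x :=
    Real.hasDerivAt_rpow_const (Or.inl hx0.ne')
  have hgx : x ^ γ ≠ 0 := (Real.rpow_pos_of_pos hx0 γ).ne'
  -- abbreviations for rpow values
  set A := (b12 * x - a12) ^ (α - 1) with hA
  set B := x ^ (γ - 1) with hB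
  have hadd := Real.rpow_add hbx
  have hAa : (b12 * x - a12) ^ α = A * (b12 * x - a12) := by
    have h := hadd (α - 1) 1
    rw [Real.rpow_one] at h
    rw [show α = α - 1 + 1 by ring, h, hA]
  have hAb : (b12 * x - a12) ^ (α - 1 - 1) = A / (b12 * x - a12) := by
    have h := hadd (α - 1 - 1) 1
    rw [Real.rpow_one] at h
    rw [eq_div_iff hbx.ne', hA, ← h]
    congr 1; ring
  have hBx : x ^ γ = B * x := by
    have h := Real.rpow_add hx0 (γ - 1) 1
    rw [Real.rpow_one] at h
    rw [show γ = γ - 1 + 1 by ring, h, hB]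
  have hA0 : A ≠ 0 := (Real.rpow_pos_of_pos hbx _).ne'
  have hB0 : B ≠ 0 := (Real.rpow_pos_of_pos hx0 _).ne'
  constructor
  · -- second equation's function
    have hnum : HasDerivAt (fun y => (a12 * y - b12 * y ^ 2) * (C1 * a11 * (b12 * y - a12) ^ (α - 1)))
        ((a12 - b12 * (2 * x)) * (C1 * a11 * (b12 * x - a12) ^ (α - 1))
          + (a12 * x - b12 * x ^ 2) * (C1 * a11 * (b12 * (α - 1) * (b12 * x - a12) ^ (α - 1 - 1)))) x := by
      have hp : HasDerivAt (fun y : ℝ => a12 * y - b12 * y ^ 2) (a12 - b12 * (2 * x)) x := by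
        simpa [Pi.sub_def] using ((hasDerivAt_id x).const_mul a12).sub
          (((hasDerivAt_pow 2 x)).const_mul b12)
      exact hp.mul ((hpow2.const_mul (C1 * a11)))
    have hF := hnum.div hg hgx
    have heq : (fun y => (a12 * y - b12 * y ^ 2) * h2 y)
        = fun y => (a12 * y - b12 * y ^ 2) * (C1 * a11 * (b12 * y - a12) ^ (α - 1)) / y ^ γ := by
      funext y; rw [hh2 y]; ring
    rw [heq]
    refine hF.congr_deriv ?_
    rw [hh1 x, hh2 x, hAa, hAb, hBx, ← hA, hγ, hα]
    field_simp
    ring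
  · have hnum : HasDerivAt (fun y => a11 * y * (C1 * (b12 * y - a12) ^ α))
        (a11 * (C1 * (b12 * x - a12) ^ α)
          + a11 * x * (C1 * (b12 * α * (b12 * x - a12) ^ (α - 1)))) x := by
      have hp : HasDerivAt (fun y : ℝ => a11 * y) a11 x := by
        simpa using (hasDerivAt_id x).const_mul a11
      exact hp.mul (hpow1.const_mul C1)
    have hF := hnum.div hg hgx
    have heq : (fun y => a11 * y * h1 y)
        = fun y => a11 * y * (C1 * (b12 * y - a12) ^ α) / y ^ γ := by
      funext y; rw [hh1 y]; ring
    rw [heq]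
    refine hF.congr_deriv ?_
    rw [hh1 x, hh2 x, hAa, hBx, ← hA, hγ, hα]
    field_simp
    ring
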